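/- Let ℬ be an unbiased dependent lens over a reflexive graph 𝒜. If each component ℬ(p) is univalent, then the display d±ℬ is a univalent displayed reflexive graph over 𝒜. -/

import Mathlib

/-- A reflexive graph: a type of vertices, a family of edge types, and
reflexivity data. -/
structure RxGraph where
  V : Type*
  Edge : V → V → Type*
  rx : ∀ x, Edge x x

/-- The fan of a vertex `x`: vertices equipped with an edge from `x`. -/
def RxGraph.Fan (A : RxGraph) (x : A.V) : Type _ :=
  Σ y, A.Edge x y

/-- The co-fan of a vertex `x`: vertices equipped with an edge toward `x`. -/
def RxGraph.CoFan (A : RxGraph) (x : A.V) : Type _ :=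
  Σ y, A.Edge y x

/-- A reflexive graph is univalent (a path object) when every fan is a
subsingleton. -/
def RxGraph.Univalent (A : RxGraph) : Prop :=
  ∀ x, Subsingleton (A.Fan x)

/-- A displayed reflexive graph over a reflexive graph `A`. -/
structure DispRxGraph (A : RxGraph) where
  V : A.V → Type*
  Edge : ∀ {x y : A.V}, A.Edge x y → V x → V y → Type*
  drx : ∀ (x : A.V) (u : V x), Edge (A.rx x) u u

/-- The component of a displayed reflexive graph at a vertex. -/
def DispRxGraph.component {A : RxGraph} (B : DispRxGraph A) (x : A.V) :
    RxGraph where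
  V := B.V x
  Edge := fun u v => B.Edge (A.rx x) u v
  rx := fun u => B.drx x u

/-- A displayed reflexive graph is univalent (a displayed path object) when
each of its components is univalent. -/
def DispRxGraph.Univalent {A : RxGraph} (B : DispRxGraph A) : Prop :=
  ∀ x, (B.component x).Univalent

/-- An unbiased dependent lens over a reflexive graph `A`: a family of
reflexive graphs indexed in edges, with left/right extension operations and
the coherences `extRx` and `rextRx`. -/
structure UnbLens (A : RxGraph) where
  B : ∀ {x y : A.V}, A.Edge x y → RxGraph.{u_3, u_4}
  lext : ∀ {x y : A.V} (p : A.Edge x y), (B (A.rx x)).V → (B p).V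
  rext : ∀ {x y : A.V} (p : A.Edge x y), (B (A.rx y)).V → (B p).V
  extRx : ∀ (x : A.V) (u : (B (A.rx x)).V),
    (B (A.rx x)).Edge (lext (A.rx x) u) (rext (A.rx x) u)
  rextRx : ∀ (x : A.V) (u : (B (A.rx x)).V),
    (B (A.rx x)).Edge u (rext (A.rx x) u)

/-- The display of an unbiased dependent lens. -/
def UnbLens.disp {A : RxGraph} (L : UnbLens A) : DispRxGraph A where
  V := fun x => (L.B (A.rx x)).V
  Edge := fun p u v => (L.B p).Edge (L.lext p u) (L.rext p v)
  drx := fun x u => L.extRx x u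

/-- If each component of an unbiased dependent lens is univalent then its
display is a univalent displayed reflexive graph. -/
theorem unbLens_disp_univalent {A : RxGraph} (L : UnbLens A)
    (h : ∀ {x y : A.V} (p : A.Edge x y), (L.B p).Univalent) :
    L.disp.Univalent := by
  intro x u
  constructor
  rintro ⟨v, e⟩ ⟨v', e'⟩
  have hv : ∀ w : (L.B (A.rx x)).V, w = L.rext (A.rx x) w := by
    intro w
    have : (⟨w, (L.B (A.rx x)).rx w⟩ : (L.B (A.rx x)).Fan w)
        = ⟨L.rext (A.rx x) w, L.rextRx x w⟩ :=
      @Subsingleton.elim _ (h (A.rx x) w) _ _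
    exact congrArg Sigma.fst this
  have key : (⟨L.rext (A.rx x) v, e⟩ : (L.B (A.rx x)).Fan (L.lext (A.rx x) u))
      = ⟨L.rext (A.rx x) v', e'⟩ :=
    @Subsingleton.elim _ (h (A.rx x) (L.lext (A.rx x) u)) _ _
  have hvv : v = v' := (hv v).trans ((congrArg Sigma.fst key).trans (hv v').symm)
  subst hvv
  have key' : (⟨L.rext (A.rx x) v, e⟩ : Σ y, (L.B (A.rx x)).Edge (L.lext (A.rx x) u) y)
      = ⟨L.rext (A.rx x) v, e'⟩ := key
  have he : e = e' := eq_of_heq (Sigma.mk.inj_iff.mp key').2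
  subst he
  rfl
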